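/- Let E₀(ρ) = log₂ Σ_y (Σ_x p_{XY}(x,y)^{1/(1+ρ)})^{1+ρ} be the Gallager function of a joint source. Then for ρ > 0, ρ·H(p̄^ρ_{X|Y}) − E₀(ρ) = D(p̄^ρ_{XY} ‖ p_{XY}), where p̄^ρ is the X–Y tilted distribution, H(p̄^ρ_{X|Y}) its conditional entropy, and D the KL divergence (all in bits). -/

import Mathlib

/-- The `X–Y` tilted distribution `p̄^ρ_{XY}` of a joint pmf `p` on `𝒳 × 𝒴`. -/
noncomputable def tilt {𝒳 𝒴 : Type*} [Fintype 𝒳] [Fintype 𝒴]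
    (p : 𝒳 × 𝒴 → ℝ) (ρ : ℝ) (z : 𝒳 × 𝒴) : ℝ :=
  ((∑ s, p (s, z.2) ^ ((1 : ℝ) / (1 + ρ))) ^ (1 + ρ)
      / ∑ t, (∑ s, p (s, t) ^ ((1 : ℝ) / (1 + ρ))) ^ (1 + ρ))
    * (p z ^ ((1 : ℝ) / (1 + ρ)) / ∑ s, p (s, z.2) ^ ((1 : ℝ) / (1 + ρ)))

/-- Conditional Shannon entropy `H(X|Y)` (in bits) of a joint pmf on `𝒳 × 𝒴`. -/
noncomputable def condEnt {𝒳 𝒴 : Type*} [Fintype 𝒳] [Fintype 𝒴] (p : 𝒳 × 𝒴 → ℝ) : ℝ :=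
  -∑ z : 𝒳 × 𝒴, p z * Real.logb 2 (p z / ∑ x, p (x, z.2))

/-- KL divergence (in bits) between pmfs on a finite set. -/
noncomputable def klDiv {α : Type*} [Fintype α] (q p : α → ℝ) : ℝ :=
  ∑ a, q a * Real.logb 2 (q a / p a)

/-- Gallager source function `E₀(ρ)` for a joint source with side-information. -/
noncomputable def gallagerE0 {𝒳 𝒴 : Type*} [Fintype 𝒳] [Fintype 𝒴]
    (p : 𝒳 × 𝒴 → ℝ) (ρ : ℝ) : ℝ :=
  Real.logb 2 (∑ y, (∑ x, p (x, y) ^ ((1 : ℝ) / (1 + ρ))) ^ (1 + ρ))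

lemma logb_rpow'' {x : ℝ} (hx : 0 < x) (y b : ℝ) :
    Real.logb b (x ^ y) = y * Real.logb b x := by
  rw [Real.logb, Real.logb, Real.log_rpow hx, mul_div_assoc]

/-- For `ρ > 0`,
`ρ·H(p̄^ρ_{X|Y}) − E₀(ρ) = D(p̄^ρ_{XY} ‖ p_{XY})` (all in bits). -/
theorem tilted_identity {𝒳 𝒴 : Type*} [Fintype 𝒳] [Fintype 𝒴]
    (p : 𝒳 × 𝒴 → ℝ) (hp : ∀ z, 0 ≤ p z) (hpsum : ∑ z, p z = 1)
    (hY : ∀ y, 0 < ∑ x, p (x, y))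
    (ρ : ℝ) (hρ : 0 < ρ) :
    ρ * condEnt (tilt p ρ) - gallagerE0 p ρ = klDiv (tilt p ρ) p := by
  have h1ρ : (0:ℝ) < 1 + ρ := by linarith
  obtain ⟨α, hα_def⟩ : ∃ α : ℝ, α = (1:ℝ)/(1+ρ) := ⟨_, rfl⟩
  have hα : 0 < α := by rw [hα_def]; positivity
  obtain ⟨A, hA_def⟩ : ∃ A : 𝒴 → ℝ, A = fun y => ∑ s, p (s, y) ^ α := ⟨_, rfl⟩
  obtain ⟨Z, hZ_def⟩ : ∃ Z : ℝ, Z = ∑ t, (A t) ^ (1+ρ) := ⟨_, rfl⟩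
  have hA : ∀ y, 0 < A y := by
    intro y
    obtain ⟨x, hx⟩ : ∃ x, 0 < p (x, y) := by
      by_contra h
      push_neg at h
      have h0 : ∑ x, p (x, y) = 0 :=
        Finset.sum_eq_zero fun x _ => le_antisymm (h x) (hp _)
      exact absurd h0 (ne_of_gt (hY y))
    rw [hA_def]
    exact Finset.sum_pos' (fun x _ => Real.rpow_nonneg (hp _) _)
      ⟨x, Finset.mem_univ x, Real.rpow_pos_of_pos hx _⟩
  have h𝒴 : Nonempty 𝒴 := by
    by_contra h
    rw [not_nonempty_iff] at h
    have : IsEmpty (𝒳 × 𝒴) := ⟨fun z => h.elim z.2⟩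
    rw [Finset.univ_eq_empty, Finset.sum_empty] at hpsum
    norm_num at hpsum
  have hZ : 0 < Z := by
    rw [hZ_def]
    exact Finset.sum_pos (fun y _ => Real.rpow_pos_of_pos (hA y) _) Finset.univ_nonempty
  have htilt : ∀ z : 𝒳 × 𝒴,
      tilt p ρ z = (A z.2)^(1+ρ)/Z * (p z ^ α / A z.2) := by
    intro z
    rw [hZ_def, hA_def, hα_def]
    rfl
  have hmarg : ∀ y, ∑ x, tilt p ρ (x, y) = (A y)^(1+ρ)/Z := by
    intro y
    have hAy : ∑ x, p (x, y) ^ α = A y := by rw [hA_def]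
    calc ∑ x, tilt p ρ (x, y)
        = ∑ x, (A y)^(1+ρ)/Z * (p (x, y) ^ α / A y) := by
          refine Finset.sum_congr rfl fun x _ => ?_
          exact htilt (x, y)
      _ = (A y)^(1+ρ)/Z * ((∑ x, p (x, y) ^ α) / A y) := by
          rw [← Finset.mul_sum, ← Finset.sum_div]
      _ = (A y)^(1+ρ)/Z := by rw [hAy, div_self (ne_of_gt (hA y)), mul_one]
  have hqsum : ∑ z, tilt p ρ z = 1 := by
    rw [Fintype.sum_prod_type_right]
    simp only [hmarg]
    rw [← Finset.sum_div, ← hZ_def, div_self (ne_of_gt hZ)]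
  have key : ∀ z : 𝒳 × 𝒴,
      tilt p ρ z * Real.logb 2 (tilt p ρ z / p z)
        + ρ * (tilt p ρ z * Real.logb 2 (tilt p ρ z / ∑ x, tilt p ρ (x, z.2)))
        + tilt p ρ z * Real.logb 2 Z = 0 := by
    intro z
    rcases eq_or_lt_of_le (hp z) with h0 | hP
    · have hq0 : tilt p ρ z = 0 := by
        rw [htilt z, ← h0, Real.zero_rpow (ne_of_gt hα), zero_div, mul_zero]
      simp [hq0]
    · have ha := hA z.2
      have haρ : (0:ℝ) < (A z.2)^(1+ρ) := Real.rpow_pos_of_pos ha _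
      have hPα : (0:ℝ) < p z ^ α := Real.rpow_pos_of_pos hP _
      rw [hmarg z.2, htilt z]
      have hc1 : (A z.2)^(1+ρ)/Z * (p z ^ α / A z.2) / ((A z.2)^(1+ρ)/Z)
          = p z ^ α / A z.2 := by
        field_simp
      have hc2 : (A z.2)^(1+ρ)/Z * (p z ^ α / A z.2) / p z
          = (A z.2)^(1+ρ) * p z ^ α / (Z * A z.2 * p z) := by
        field_simp
      rw [hc1, hc2,
        Real.logb_div (by positivity) (by positivity),
        Real.logb_mul (ne_of_gt haρ) (ne_of_gt hPα),
        Real.logb_mul (by positivity) (ne_of_gt hP),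
        Real.logb_mul (ne_of_gt hZ) (ne_of_gt ha),
        Real.logb_div (ne_of_gt hPα) (ne_of_gt ha),
        logb_rpow'' ha, logb_rpow'' hP]
      have hαρ : α * (1+ρ) = 1 := by rw [hα_def]; field_simp
      linear_combination ((A z.2)^(1+ρ)/Z * (p z ^ α / A z.2) * Real.logb 2 (p z)) * hαρ
  have hsum0 : ∑ z : 𝒳 × 𝒴,
      (tilt p ρ z * Real.logb 2 (tilt p ρ z / p z)
        + ρ * (tilt p ρ z * Real.logb 2 (tilt p ρ z / ∑ x, tilt p ρ (x, z.2)))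
        + tilt p ρ z * Real.logb 2 Z) = 0 :=
    Finset.sum_eq_zero fun z _ => key z
  rw [Finset.sum_add_distrib, Finset.sum_add_distrib, ← Finset.mul_sum,
    ← Finset.sum_mul, hqsum, one_mul] at hsum0
  have hE0 : gallagerE0 p ρ = Real.logb 2 Z := by
    unfold gallagerE0
    congr 1
    rw [hZ_def, hA_def, hα_def]
  unfold condEnt klDiv
  rw [hE0]
  linarith [hsum0]
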